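/- There exists a ring R such that R is a left C4*-ring but R is not a right C4*-ring. -/

import Mathlib

open MulOpposite

section C4Defs

/-- A submodule is a direct summand if it has a complement. -/
def IsDirectSummand {R M : Type*} [Ring R] [AddCommGroup M] [Module R M]
    (A : Submodule R M) : Prop :=
  ∃ B : Submodule R M, IsCompl A B

/-- `M` is a `C4`-module over `R`: for every internal direct sum decomposition `M = A ⊕ B`
and every homomorphism `f : A → B` whose kernel is a direct summand of `A`, the image of `f`
is a direct summand of `B`. -/
def IsC4Module (R M : Type*) [Ring R] [AddCommGroup M] [Module R M] : Prop :=
  ∀ A B : Submodule R M, IsCompl A B → ∀ f : A →ₗ[R] B,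
    IsDirectSummand (LinearMap.ker f) → IsDirectSummand (LinearMap.range f)

/-- `M` is a `C4*`-module: every submodule of `M` is a `C4`-module. -/
def IsC4StarModule (R M : Type*) [Ring R] [AddCommGroup M] [Module R M] : Prop :=
  ∀ N : Submodule R M, IsC4Module R N

/-- `M` is square-free: no nonzero submodules `A`, `B` with `A ⊓ B = ⊥` and `A ≅ B`. -/
def IsSquareFreeModule (R M : Type*) [Ring R] [AddCommGroup M] [Module R M] : Prop :=
  ∀ A B : Submodule R M, A ≠ ⊥ → B ≠ ⊥ → A ⊓ B = ⊥ → IsEmpty (A ≃ₗ[R] B)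

/-- `M` is summand-square-free: no nonzero direct summands `A`, `B` with `A ⊓ B = ⊥`
and `A ≅ B`. -/
def IsSummandSquareFree (R M : Type*) [Ring R] [AddCommGroup M] [Module R M] : Prop :=
  ∀ A B : Submodule R M, IsDirectSummand A → IsDirectSummand B →
    A ≠ ⊥ → B ≠ ⊥ → A ⊓ B = ⊥ → IsEmpty (A ≃ₗ[R] B)

/-- `X` is an essential submodule of `A`. -/
def IsEssentialIn {R M : Type*} [Ring R] [AddCommGroup M] [Module R M]
    (X A : Submodule R M) : Prop :=
  X ≤ A ∧ ∀ N : Submodule R M, N ≤ A → N ≠ ⊥ → X ⊓ N ≠ ⊥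

/-- A triple `(X, Y, f)` where `X`, `Y` are semisimple direct summands of `M` with
`X ⊓ Y = ⊥` and `f : X ≅ Y` an isomorphism.  These are the elements of the poset `S(M)`
from the definition of semi-weak-CS modules. -/
structure SWTriple (R M : Type*) [Ring R] [AddCommGroup M] [Module R M] where
  X : Submodule R M
  Y : Submodule R M
  semisimpleX : IsSemisimpleModule R X
  semisimpleY : IsSemisimpleModule R Y
  summandX : IsDirectSummand X
  summandY : IsDirectSummand Y
  disj : X ⊓ Y = ⊥
  f : X ≃ₗ[R] Y

/-- The extension order on the poset `S(M)` of triples: `(X₁,Y₁,f₁) ≤ (X₂,Y₂,f₂)` iff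
`X₁ ≤ X₂`, `Y₁ ≤ Y₂` and `f₂` restricts to `f₁` on `X₁`. -/
def SWTriple.Extends {R M : Type*} [Ring R] [AddCommGroup M] [Module R M]
    (t s : SWTriple R M) : Prop :=
  ∃ hX : t.X ≤ s.X, t.Y ≤ s.Y ∧
    ∀ x : t.X, (s.f ⟨x.1, hX x.2⟩ : M) = (t.f x : M)

/-- `M` is semi-weak-CS: for every chain in the poset `S(M)`, with `X` the union of the first
components and `Y` the union of the second components, there are direct summands `A`, `B`
of `M` with `X` essential in `A` and `Y` essential in `B`. -/
def IsSemiWeakCS (R M : Type*) [Ring R] [AddCommGroup M] [Module R M] : Prop :=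
  ∀ C : Set (SWTriple R M), IsChain SWTriple.Extends C →
    ∃ A B : Submodule R M, IsDirectSummand A ∧ IsDirectSummand B ∧
      IsEssentialIn (⨆ t ∈ C, t.X) A ∧ IsEssentialIn (⨆ t ∈ C, t.Y) B

/-- `M` is strongly `C4*` if it is both semi-weak-CS and `C4*`. -/
def IsStronglyC4StarModule (R M : Type*) [Ring R] [AddCommGroup M] [Module R M] : Prop :=
  IsSemiWeakCS R M ∧ IsC4StarModule R M

/-- `R` is a right `C4*`-ring: the right regular module `R_R` (i.e. `R` as a module over
`Rᵐᵒᵖ`) is a `C4*`-module. -/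
def IsRightC4StarRing (R : Type*) [Ring R] : Prop := IsC4StarModule Rᵐᵒᵖ R

/-- `R` is a left `C4*`-ring: the left regular module `_RR` is a `C4*`-module. -/
def IsLeftC4StarRing (R : Type*) [Ring R] : Prop := IsC4StarModule R R

/-- `R` is a strongly right `C4*`-ring. -/
def IsStronglyRightC4StarRing (R : Type*) [Ring R] : Prop := IsStronglyC4StarModule Rᵐᵒᵖ R

/-- `R` is a strongly left `C4*`-ring. -/
def IsStronglyLeftC4StarRing (R : Type*) [Ring R] : Prop := IsStronglyC4StarModule R R

/-- `R` is right semi-weak-CS. -/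
def IsRightSemiWeakCSRing (R : Type*) [Ring R] : Prop := IsSemiWeakCS Rᵐᵒᵖ R

/-- `R` is left semi-weak-CS. -/
def IsLeftSemiWeakCSRing (R : Type*) [Ring R] : Prop := IsSemiWeakCS R R

/-- The left square-free transfer condition `LSF`: if the right regular module `T_T` is
summand-square-free then the left regular module `_TT` is square-free. -/
def LSF (T : Type*) [Ring T] : Prop :=
  IsSummandSquareFree Tᵐᵒᵖ T → IsSquareFreeModule T T

end C4Defs

section Corner

variable {T : Type*} [Ring T]

/-- The corner `eTe = {x : T | e * x = x ∧ x * e = x}` as a non-unital subring. -/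
def cornerSubring (e : T) : NonUnitalSubring T where
  carrier := {x : T | e * x = x ∧ x * e = x}
  add_mem' := by
    rintro a b ⟨ha1, ha2⟩ ⟨hb1, hb2⟩
    exact ⟨by rw [mul_add, ha1, hb1], by rw [add_mul, ha2, hb2]⟩
  zero_mem' := ⟨mul_zero e, zero_mul e⟩
  neg_mem' := by
    rintro a ⟨ha1, ha2⟩
    exact ⟨by rw [mul_neg, ha1], by rw [neg_mul, ha2]⟩
  mul_mem' := by
    rintro a b ⟨ha1, ha2⟩ ⟨hb1, hb2⟩
    exact ⟨by rw [← mul_assoc, ha1], by rw [mul_assoc, hb2]⟩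

theorem mem_cornerSubring {e x : T} :
    x ∈ cornerSubring e ↔ e * x = x ∧ x * e = x := Iff.rfl

/-- The corner ring `eTe` associated to an idempotent `e` of `T`; its identity is `e`. -/
def Corner (e : T) (he : IsIdempotentElem e) : Type _ := ↥(cornerSubring e)

instance {e : T} {he : IsIdempotentElem e} : Ring (Corner e he) :=
  { (inferInstance : NonUnitalRing ↥(cornerSubring e)) with
    one := ⟨e, he, he⟩
    one_mul := fun x => Subtype.ext (mem_cornerSubring.mp x.2).1
    mul_one := fun x => Subtype.ext (mem_cornerSubring.mp x.2).2 }

/-- `eT = {x : T | e * x = x}` as an additive subgroup; it is a left module over the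
corner ring `eTe`. -/
def leftPart (e : T) : AddSubgroup T where
  carrier := {x : T | e * x = x}
  add_mem' := by
    intro a b ha hb
    simp only [Set.mem_setOf_eq] at *
    rw [mul_add, ha, hb]
  zero_mem' := mul_zero e
  neg_mem' := by
    intro a ha
    simp only [Set.mem_setOf_eq] at *
    rw [mul_neg, ha]

/-- `Te = {x : T | x * e = x}` as an additive subgroup; it is a right module over the
corner ring `eTe`. -/
def rightPart (e : T) : AddSubgroup T where
  carrier := {x : T | x * e = x}
  add_mem' := by
    intro a b ha hb
    simp only [Set.mem_setOf_eq] at *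
    rw [add_mul, ha, hb]
  zero_mem' := zero_mul e
  neg_mem' := by
    intro a ha
    simp only [Set.mem_setOf_eq] at *
    rw [neg_mul, ha]

theorem mem_leftPart {e x : T} : x ∈ leftPart e ↔ e * x = x := Iff.rfl

theorem mem_rightPart {e x : T} : x ∈ rightPart e ↔ x * e = x := Iff.rfl

/-- `eT` is a (unital) left module over the corner ring `eTe`. -/
instance {e : T} {he : IsIdempotentElem e} : Module (Corner e he) ↥(leftPart e) where
  smul c x := ⟨c.1 * x.1, by
    have h1 : e * c.1 = c.1 := (mem_cornerSubring.mp c.2).1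
    show e * (c.1 * x.1) = c.1 * x.1
    rw [← mul_assoc, h1]⟩
  one_smul x := Subtype.ext (by
    show e * x.1 = x.1
    exact mem_leftPart.mp x.2)
  mul_smul a b x := Subtype.ext (by
    show (a.1 * b.1) * x.1 = a.1 * (b.1 * x.1)
    rw [mul_assoc])
  smul_zero a := Subtype.ext (by
    show a.1 * 0 = 0
    exact mul_zero _)
  smul_add a x y := Subtype.ext (by
    show a.1 * (x.1 + y.1) = a.1 * x.1 + a.1 * y.1
    exact mul_add _ _ _)
  add_smul a b x := Subtype.ext (by
    show (a.1 + b.1) * x.1 = a.1 * x.1 + b.1 * x.1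
    exact add_mul _ _ _)
  zero_smul x := Subtype.ext (by
    show (0 : T) * x.1 = 0
    exact zero_mul _)

/-- `Te` is a (unital) right module over the corner ring `eTe`, i.e. a module over
`(eTe)ᵐᵒᵖ`. -/
instance {e : T} {he : IsIdempotentElem e} : Module (Corner e he)ᵐᵒᵖ ↥(rightPart e) where
  smul c x := ⟨x.1 * (unop c).1, by
    have h2 : (unop c).1 * e = (unop c).1 := (mem_cornerSubring.mp (unop c).2).2
    show (x.1 * (unop c).1) * e = x.1 * (unop c).1
    rw [mul_assoc, h2]⟩
  one_smul x := Subtype.ext (by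
    show x.1 * e = x.1
    exact mem_rightPart.mp x.2)
  mul_smul a b x := Subtype.ext (by
    show x.1 * ((unop b).1 * (unop a).1) = (x.1 * (unop b).1) * (unop a).1
    rw [mul_assoc])
  smul_zero a := Subtype.ext (by
    show (0 : T) * (unop a).1 = 0
    exact zero_mul _)
  smul_add a x y := Subtype.ext (by
    show (x.1 + y.1) * (unop a).1 = x.1 * (unop a).1 + y.1 * (unop a).1
    exact add_mul _ _ _)
  add_smul a b x := Subtype.ext (by
    show x.1 * ((unop a).1 + (unop b).1) = x.1 * (unop a).1 + x.1 * (unop b).1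
    exact mul_add _ _ _)
  zero_smul x := Subtype.ext (by
    show x.1 * (0 : T) = 0
    exact mul_zero _)

/-- The hereditary side-transfer condition `HST`: for every idempotent `e` of `T`, if the
module `eT`/`Te` is summand-square-free as a right `eTe`-module (formalized on the carrier
`Te = rightPart e`, which carries the unital right `eTe`-action; at `e = 1` this is the right
regular module `T_T`), then the left `eTe`-module (carrier `eT = leftPart e`, carrying the
unital left `eTe`-action; at `e = 1` this is the left regular module `_TT`) is square-free. -/
def HST (T : Type*) [Ring T] : Prop :=
  ∀ (e : T) (he : IsIdempotentElem e),
    IsSummandSquareFree (Corner e he)ᵐᵒᵖ ↥(rightPart e) →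
      IsSquareFreeModule (Corner e he) ↥(leftPart e)

/-- The corner-stability axiom `CSA`: for every idempotent `e` of `T`, the left regular
module of the corner ring `eTe` is semi-weak-CS. -/
def CSA' (T : Type*) [Ring T] : Prop :=
  ∀ (e : T) (he : IsIdempotentElem e),
    IsSemiWeakCS (Corner e he) (Corner e he)

end Corner

section SymmetryDatum

/-- A right-to-left symmetry datum on `R`: a ring decomposition `R ≅ S × T` where `S` is
semisimple artinian, the right regular module `T_T` is summand-square-free, the two ideals
`S`, `T` are orthogonal as right `R`-modules (no nonzero isomorphic right `R`-submodules),
and `T` satisfies `HST` and `CSA`. -/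
structure RightToLeftSymmetryDatum (R S T : Type*) [Ring R] [Ring S] [Ring T] where
  iso : R ≃+* S × T
  semisimpleArtinian : IsSemisimpleRing S
  ssf : IsSummandSquareFree Tᵐᵒᵖ T
  orthogonal : ∀ A B : Submodule Rᵐᵒᵖ R,
    (∀ a ∈ A, (iso a).2 = 0) → (∀ b ∈ B, (iso b).1 = 0) →
    A ≠ ⊥ → B ≠ ⊥ → IsEmpty (A ≃ₗ[Rᵐᵒᵖ] B)
  hst : HST T
  csa : CSA' T

end SymmetryDatum

section Beta

variable (R : Type*) [Ring R]

/-- The right annihilator `r_R(P) = {s : R | P s = 0}` of a right submodule `P` of `R`. -/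
def rightAnnSet (P : Submodule Rᵐᵒᵖ R) : Set R := {s : R | ∀ p ∈ P, p * s = 0}

/-- The annihilator-bidual `β_r(P) = ℓ_R(r_R(P))`, as a right ideal of `R`. -/
def betaR (P : Submodule Rᵐᵒᵖ R) : Submodule Rᵐᵒᵖ R where
  carrier := {r : R | ∀ s ∈ rightAnnSet R P, r * s = 0}
  add_mem' := by
    intro a b ha hb
    intro s hs
    rw [add_mul, ha s hs, hb s hs, add_zero]
  zero_mem' := by
    intro s hs
    exact zero_mul s
  smul_mem' := by
    intro c x hx s hs
    show (x * unop c) * s = 0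
    rw [mul_assoc]
    refine hx _ ?_
    intro p hp
    rw [← mul_assoc]
    exact hs (p * unop c) (Submodule.smul_mem P c hp)

/-- A right ideal is a two-sided ideal which is a ring direct summand of `R` iff it is of
the form `cR` for a central idempotent `c`. -/
def IsRingDirectSummandIdeal {R : Type*} [Ring R] (I : Submodule Rᵐᵒᵖ R) : Prop :=
  ∃ c : R, IsIdempotentElem c ∧ (∀ r : R, c * r = r * c) ∧ (∀ x : R, x ∈ I ↔ c * x = x)

/-- `R` has right semisimple annihilator asymmetry. -/
def HasRightSemisimpleAnnihilatorAsymmetry (R : Type*) [Ring R] : Prop :=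
  ∃ P : Submodule Rᵐᵒᵖ R, IsSemisimpleModule Rᵐᵒᵖ P ∧ IsDirectSummand P ∧
    (¬ IsSemisimpleModule Rᵐᵒᵖ (betaR R P) ∨
     (IsSemisimpleModule Rᵐᵒᵖ (betaR R P) ∧ ¬ IsRingDirectSummandIdeal (betaR R P)) ∨
     ¬ IsEssentialIn P (betaR R P))

end Beta


noncomputable section Skew
open Polynomial

abbrev K : Type := RatFunc (ZMod 2)

instance : CharP K 2 := charP_of_injective_ringHom (algebraMap (ZMod 2) K).injective 2

def σ : K →+* K := frobenius K 2

lemma σ_not_surj : (RatFunc.X : K) ∉ Set.range σ := by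
  rintro ⟨f, hf⟩
  have hf0 : f ≠ 0 := by rintro rfl; simp [σ, frobenius_def] at hf; exact RatFunc.X_ne_zero hf.symm
  have : RatFunc.intDegree (f * f) = 1 := by
    rw [show f * f = RatFunc.X from by rw [← hf]; simp [σ, frobenius_def, sq]]
    exact RatFunc.intDegree_X
  rw [RatFunc.intDegree_mul hf0 hf0] at this
  omega

def pw (i : ℕ) : K →+* K := σ ^ i

lemma pw_zero : pw 0 = RingHom.id K := rfl
lemma pw_one : pw 1 = σ := pow_one σ
lemma pw_add (i j : ℕ) (x : K) : pw (i + j) x = pw i (pw j x) := by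
  rw [pw, pow_add]; rfl
lemma pw_inj (i : ℕ) : Function.Injective (pw i) := (pw i).injective
lemma pw_ne_zero (i : ℕ) {x : K} (hx : x ≠ 0) : pw i x ≠ 0 := by
  intro h; exact hx (pw_inj i (by simpa using h))

/-- the skew multiplication on the carrier `K[X]`. -/
def mulP (p q : K[X]) : K[X] := p.sum fun i a => C a * X ^ i * (q.map (pw i))

lemma mulP_add_left (p p' q : K[X]) : mulP (p + p') q = mulP p q + mulP p' q := by
  unfold mulP
  apply sum_add_index <;> intros <;> simp [add_mul]

lemma mulP_add_right (p q q' : K[X]) : mulP p (q + q') = mulP p q + mulP p q' := by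
  unfold mulP
  rw [← sum_add]
  congr 1; funext i a
  simp [Polynomial.map_add, mul_add]

lemma mulP_monomial_left (i : ℕ) (a : K) (q : K[X]) :
    mulP (monomial i a) q = C a * X ^ i * (q.map (pw i)) := by
  unfold mulP
  apply sum_monomial_index
  simp

lemma mulP_monomial_monomial (i j : ℕ) (a b : K) :
    mulP (monomial i a) (monomial j b) = monomial (i + j) (a * pw i b) := by
  rw [mulP_monomial_left, map_monomial]
  rw [C_mul_X_pow_eq_monomial, monomial_mul_monomial]

lemma zero_mulP (q : K[X]) : mulP 0 q = 0 := sum_zero_index _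

lemma mulP_zero (p : K[X]) : mulP p 0 = 0 := by
  unfold mulP
  simp [Polynomial.map_zero, sum_def]

lemma one_mulP (q : K[X]) : mulP 1 q = q := by
  rw [← C_1, ← monomial_zero_left, mulP_monomial_left]
  simp [pw_zero]

lemma mulP_one (p : K[X]) : mulP p 1 = p := by
  unfold mulP
  simp only [Polynomial.map_one, mul_one]
  exact sum_C_mul_X_pow_eq p

lemma mulP_assoc (p q r : K[X]) : mulP (mulP p q) r = mulP p (mulP q r) := by
  induction p using Polynomial.induction_on' with
  | add p1 p2 h1 h2 => rw [mulP_add_left, mulP_add_left, mulP_add_left, h1, h2]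
  | monomial i a =>
    induction q using Polynomial.induction_on' with
    | add q1 q2 h1 h2 =>
      rw [mulP_add_right, mulP_add_left, mulP_add_left, mulP_add_right, h1, h2]
    | monomial j b =>
      induction r using Polynomial.induction_on' with
      | add r1 r2 h1 h2 =>
        rw [mulP_add_right, mulP_add_right, mulP_add_right, h1, h2]
      | monomial k c =>
        rw [mulP_monomial_monomial, mulP_monomial_monomial, mulP_monomial_monomial,
          mulP_monomial_monomial]
        congr 1
        · rw [add_assoc]
        · rw [map_mul (pw i), ← pw_add, mul_assoc]

lemma coeff_mulP (p q : K[X]) (n : ℕ) :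
    (mulP p q).coeff n = p.sum fun i a => if i ≤ n then a * pw i (q.coeff (n - i)) else 0 := by
  unfold mulP
  rw [sum_def, sum_def, finset_sum_coeff]
  apply Finset.sum_congr rfl
  intro i _
  rw [mul_comm (C (p.coeff i) * X ^ i) _, ← mul_assoc, mul_comm _ (C (p.coeff i)),
    mul_assoc, coeff_C_mul, coeff_mul_X_pow', coeff_map, mul_ite, mul_zero]

lemma natDegree_mulP_le (p q : K[X]) : (mulP p q).natDegree ≤ p.natDegree + q.natDegree := by
  rw [natDegree_le_iff_coeff_eq_zero]
  intro N hN
  rw [coeff_mulP, sum_def]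
  apply Finset.sum_eq_zero
  intro i hi
  have hip : i ≤ p.natDegree := le_natDegree_of_mem_supp i hi
  split_ifs with h
  · have : q.natDegree < N - i := by omega
    rw [coeff_eq_zero_of_natDegree_lt this, map_zero, mul_zero]
  · rfl

lemma mulP_ne_zero {p q : K[X]} (hp : p ≠ 0) (hq : q ≠ 0) : mulP p q ≠ 0 := by
  intro h
  have hco : (mulP p q).coeff (p.natDegree + q.natDegree) = 0 := by rw [h]; simp
  rw [coeff_mulP, sum_def] at hco
  rw [Finset.sum_eq_single p.natDegree] at hco
  · rw [if_pos (Nat.le_add_right _ _)] at hco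
    simp only [Nat.add_sub_cancel_left] at hco
    rcases mul_eq_zero.mp hco with h1 | h1
    · exact hp (leadingCoeff_eq_zero.mp h1)
    · exact hq (leadingCoeff_eq_zero.mp (pw_inj p.natDegree (by simpa using h1)))
  · intro i hi hne
    have hip : i ≤ p.natDegree := le_natDegree_of_mem_supp i hi
    have hq0 : q.coeff (p.natDegree + q.natDegree - i) = 0 :=
      coeff_eq_zero_of_natDegree_lt (by omega)
    rw [if_pos (by omega), hq0, map_zero, mul_zero]
  · intro h
    rw [mem_support_iff, not_not] at h
    rw [if_pos (Nat.le_add_right _ _), h]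
    exact zero_mul _

lemma mulP_smul_left (c : K) (p q : K[X]) : mulP (c • p) q = c • mulP p q := by
  unfold mulP
  rw [sum_smul_index p c _ (by intros; simp), Polynomial.smul_sum]
  congr 1; funext i a
  rw [map_mul C c a, smul_eq_C_mul]
  ring

lemma mulP_neg_left (p q : K[X]) : mulP (-p) q = -(mulP p q) := by
  have := mulP_add_left p (-p) q
  rw [add_neg_cancel, zero_mulP] at this
  exact eq_neg_of_add_eq_zero_right this.symm

/-- The twisted polynomial ring `K[x;σ]`. -/
@[ext]
structure SP : Type where ofP ::
  toP : K[X]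

namespace SP

instance : Add SP := ⟨fun x y => ofP (x.toP + y.toP)⟩
instance : Neg SP := ⟨fun x => ofP (-x.toP)⟩
instance : Zero SP := ⟨ofP 0⟩
instance : Mul SP := ⟨fun x y => ofP (mulP x.toP y.toP)⟩
instance : One SP := ⟨ofP 1⟩

@[simp] lemma toP_add (x y : SP) : (x + y).toP = x.toP + y.toP := rfl
@[simp] lemma toP_neg (x : SP) : (-x).toP = -x.toP := rfl
@[simp] lemma toP_zero : (0 : SP).toP = 0 := rfl
@[simp] lemma toP_mul (x y : SP) : (x * y).toP = mulP x.toP y.toP := rfl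
@[simp] lemma toP_one : (1 : SP).toP = 1 := rfl

instance : AddCommGroup SP where
  add_assoc a b c := by ext; simp [add_assoc]
  zero_add a := by ext; simp
  add_zero a := by ext; simp
  add_comm a b := by ext; simp [add_comm]
  neg_add_cancel a := by ext; simp
  nsmul := nsmulRec
  zsmul := zsmulRec

instance instRing : Ring SP :=
  { (inferInstance : AddCommGroup SP) with
    mul_assoc := fun a b c => by ext; simp [mulP_assoc]
    one_mul := fun a => by ext; simp [one_mulP]
    mul_one := fun a => by ext; simp [mulP_one]
    left_distrib := fun a b c => by ext; simp [mulP_add_right]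
    right_distrib := fun a b c => by ext; simp [mulP_add_left]
    zero_mul := fun a => by ext; simp [zero_mulP]
    mul_zero := fun a => by ext; simp [mulP_zero] }

lemma toP_eq_zero_iff {x : SP} : x.toP = 0 ↔ x = 0 := by
  constructor
  · intro h; ext; simp [h]
  · intro h; simp [h]

instance : Nontrivial SP := ⟨⟨0, 1, by intro h; simpa using congrArg toP h⟩⟩

lemma sp_mul_ne_zero {x y : SP} (hx : x ≠ 0) (hy : y ≠ 0) : x * y ≠ 0 := by
  intro h
  have := mulP_ne_zero (p := x.toP) (q := y.toP)
    (fun hh => hx (toP_eq_zero_iff.mp hh)) (fun hh => hy (toP_eq_zero_iff.mp hh))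
  exact this (congrArg toP h)

lemma mul_eq_zero_iff {x y : SP} : x * y = 0 ↔ x = 0 ∨ y = 0 := by
  constructor
  · intro h
    by_contra hc
    push_neg at hc
    exact sp_mul_ne_zero hc.1 hc.2 h
  · rintro (rfl | rfl) <;> simp

end SP

namespace SP
open Polynomial

/-- right multiplication by a fixed polynomial is `K`-linear on the carrier. -/
def rmul (A : K[X]) : K[X] →ₗ[K] K[X] where
  toFun r := mulP r A
  map_add' r s := mulP_add_left r s A
  map_smul' c r := mulP_smul_left c r A

lemma mulP_mem_degreeLT {m : ℕ} {r : K[X]} (hr : r ∈ degreeLT K m) (A : K[X]) (d : ℕ)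
    (hA : A.natDegree ≤ d) : mulP r A ∈ degreeLT K (m + d) := by
  rw [mem_degreeLT] at hr ⊢
  rcases eq_or_ne (mulP r A) 0 with h | h
  · rw [h, degree_zero]; exact WithBot.bot_lt_coe _
  rcases eq_or_ne r 0 with rfl | hr0
  · rw [zero_mulP, degree_zero]; exact WithBot.bot_lt_coe _
  have h1 : r.natDegree < m := (natDegree_lt_iff_degree_lt hr0).mpr (by exact_mod_cast hr)
  have h2 : (mulP r A).natDegree < m + d :=
    lt_of_le_of_lt (natDegree_mulP_le r A) (by omega)
  exact_mod_cast (natDegree_lt_iff_degree_lt h).mp h2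

lemma exists_clm {a b : SP} (ha : a ≠ 0) (hb : b ≠ 0) :
    ∃ r s : SP, r ≠ 0 ∧ r * a = s * b ∧ r * a ≠ 0 := by
  classical
  set A := a.toP with hA
  set B := b.toP with hB
  have hA0 : A ≠ 0 := fun h => ha (toP_eq_zero_iff.mp h)
  have hB0 : B ≠ 0 := fun h => hb (toP_eq_zero_iff.mp h)
  set da := A.natDegree
  set db := B.natDegree
  -- the linear map (r, s) ↦ r⋆A + s⋆B from degreeLT (db+1) × degreeLT (da+1) to degreeLT (da+db+1)
  set V := degreeLT K (db + 1)
  set W := degreeLT K (da + 1)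
  set U := degreeLT K (db + 1 + da)
  have hUW : degreeLT K (da + 1 + db) = U := by
    unfold U; congr 1; omega
  have hmem : ∀ z : V × W, mulP (z.1 : K[X]) A + mulP (z.2 : K[X]) B ∈ U := by
    intro z
    apply Submodule.add_mem
    · exact mulP_mem_degreeLT z.1.2 A da le_rfl
    · exact hUW ▸ mulP_mem_degreeLT z.2.2 B db le_rfl
  set L : (V × W) →ₗ[K] U :=
    LinearMap.codRestrict U
      (((rmul A).comp V.subtype).coprod ((rmul B).comp W.subtype)) hmem
  haveI : Module.Finite K U := Module.Finite.equiv (degreeLTEquiv K _).symm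
  haveI : Module.Finite K V := Module.Finite.equiv (degreeLTEquiv K _).symm
  haveI : Module.Finite K W := Module.Finite.equiv (degreeLTEquiv K _).symm
  have hL : ¬ Function.Injective L := by
    intro hinj
    haveI : Module.Free K V := Module.Free.of_divisionRing K V
    haveI : Module.Free K W := Module.Free.of_divisionRing K W
    have hrk := LinearMap.finrank_le_finrank_of_injective hinj
    rw [Module.finrank_prod] at hrk
    have hV : Module.finrank K V = db + 1 := by
      rw [(degreeLTEquiv K _).finrank_eq, Module.finrank_fin_fun]
    have hW : Module.finrank K W = da + 1 := by
      rw [(degreeLTEquiv K _).finrank_eq, Module.finrank_fin_fun]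
    have hU : Module.finrank K U = db + 1 + da := by
      rw [(degreeLTEquiv K _).finrank_eq, Module.finrank_fin_fun]
    omega
  rw [Function.not_injective_iff] at hL
  obtain ⟨u, v, huv, hne⟩ := hL
  set z := u - v with hz
  have hz0 : z ≠ 0 := sub_ne_zero_of_ne hne
  have hLz : L z = 0 := by rw [hz, map_sub, huv, sub_self]
  have hval : mulP (z.1 : K[X]) A + mulP (z.2 : K[X]) B = 0 := by
    have := congrArg (Subtype.val) hLz
    simpa [L, LinearMap.codRestrict, rmul] using this
  have hr0 : (z.1 : K[X]) ≠ 0 := by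
    intro h
    have hs : mulP (z.2 : K[X]) B = 0 := by rw [h, zero_mulP, zero_add] at hval; exact hval
    have : (z.2 : K[X]) = 0 := by
      by_contra hs0
      exact mulP_ne_zero hs0 hB0 hs
    apply hz0
    ext : 1
    · exact Subtype.ext h
    · exact Subtype.ext this
  refine ⟨ofP (z.1 : K[X]), ofP (-(z.2 : K[X])), ?_, ?_, ?_⟩
  · intro h; exact hr0 (by simpa using congrArg toP h)
  · apply SP.ext
    show mulP (z.1 : K[X]) A = mulP (-(z.2 : K[X])) B
    rw [mulP_neg_left]
    exact eq_neg_of_add_eq_zero_left hval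
  · intro h
    exact mulP_ne_zero hr0 hA0 (by simpa using congrArg toP h)

end SP

namespace SP
open Polynomial

def xx : SP := ofP X
def tt : SP := ofP (Polynomial.C RatFunc.X)

lemma xx_ne_zero : xx ≠ 0 := by
  intro h; exact X_ne_zero (R := K) (by simpa [xx] using congrArg toP h)

lemma tt_ne_zero : tt ≠ 0 := by
  intro h
  have := congrArg toP h
  simp only [tt, toP_zero] at this
  exact RatFunc.X_ne_zero (by simpa using C_eq_zero.mp this)

lemma xx_mul_toP (r : SP) : (xx * r).toP = X * (r.toP.map σ) := by
  show mulP X r.toP = _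
  rw [← monomial_one_one_eq_X, mulP_monomial_left]
  simp [pw_one, monomial_one_one_eq_X]

lemma tt_mul_toP (r : SP) : (tt * r).toP = Polynomial.C RatFunc.X * r.toP := by
  show mulP (Polynomial.C RatFunc.X) r.toP = _
  rw [← monomial_zero_left, mulP_monomial_left]
  simp [pw_zero]

lemma xx_mul_coeff_zero (r : SP) : (xx * r).toP.coeff 0 = 0 := by
  rw [xx_mul_toP, coeff_X_mul_zero]

lemma xx_mul_coeff_succ (r : SP) (n : ℕ) : (xx * r).toP.coeff (n + 1) = σ (r.toP.coeff n) := by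
  rw [xx_mul_toP, coeff_X_mul, coeff_map]

end SP

namespace SP
open Polynomial

lemma disjoint_key {r s : SP} (h : xx * r = tt * (xx * s)) : r = 0 ∧ s = 0 := by
  have hc : ∀ n : ℕ, σ (r.toP.coeff n) = RatFunc.X * σ (s.toP.coeff n) := by
    intro n
    have e1 := xx_mul_coeff_succ r n
    have e2 : (tt * (xx * s)).toP.coeff (n + 1) = RatFunc.X * σ (s.toP.coeff n) := by
      rw [tt_mul_toP, coeff_C_mul, xx_mul_coeff_succ]
    rw [h, e2] at e1
    exact e1.symm
  have hs : s = 0 := by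
    by_contra hs0
    have : s.toP ≠ 0 := fun hh => hs0 (toP_eq_zero_iff.mp hh)
    obtain ⟨n, hn⟩ : ∃ n, s.toP.coeff n ≠ 0 := by
      by_contra hall
      push_neg at hall
      exact this (Polynomial.ext hall)
    apply σ_not_surj
    refine ⟨r.toP.coeff n * (s.toP.coeff n)⁻¹, ?_⟩
    have hσs : σ (s.toP.coeff n) ≠ 0 := fun hh => hn (σ.injective (by simpa using hh))
    rw [map_mul, map_inv₀, hc n, mul_assoc, mul_inv_cancel₀ hσs, mul_one]
  refine ⟨?_, hs⟩
  have : ∀ n, σ (r.toP.coeff n) = 0 := by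
    intro n
    rw [hc n, hs]
    simp
  apply toP_eq_zero_iff.mp
  apply Polynomial.ext
  intro n
  have := this n
  simpa using σ.injective (by simpa using this)

lemma one_notin_xxR (r : SP) : xx * r ≠ 1 := by
  intro h
  have h0 := xx_mul_coeff_zero r
  rw [h] at h0
  simp at h0

end SP


namespace SP

lemma uniform_aux (N : Submodule SP SP) (A B : Submodule SP ↥N)
    (hdisj : Disjoint A B) (hA : A ≠ ⊥) (hB : B ≠ ⊥) : False := by
  obtain ⟨za, hzaA, hza0⟩ := Submodule.exists_mem_ne_zero_of_ne_bot hA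
  obtain ⟨zb, hzbB, hzb0⟩ := Submodule.exists_mem_ne_zero_of_ne_bot hB
  have ha : (za : SP) ≠ 0 := fun h => hza0 (Subtype.ext h)
  have hb : (zb : SP) ≠ 0 := fun h => hzb0 (Subtype.ext h)
  obtain ⟨r, s, hr0, hrs, hne⟩ := exists_clm ha hb
  have hmemA : r • za ∈ A := A.smul_mem r hzaA
  have hmemB : s • zb ∈ B := B.smul_mem s hzbB
  have heq : r • za = s • zb := Subtype.ext (by
    show r • (za : SP) = s • (zb : SP)
    simpa [smul_eq_mul] using hrs)
  have : r • za = 0 := by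
    have h1 : r • za ∈ A ⊓ B := ⟨hmemA, heq ▸ hmemB⟩
    rwa [disjoint_iff.mp hdisj, Submodule.mem_bot] at h1
  apply hne
  have := congrArg (fun z : ↥N => (z : SP)) this
  simpa [smul_eq_mul] using this

theorem left_c4star : IsC4StarModule SP SP := by
  intro N A B hAB f _
  have hcase : A = ⊥ ∨ B = ⊥ := by
    by_contra hc
    push_neg at hc
    exact uniform_aux N A B hAB.disjoint hc.1 hc.2
  have hrange : LinearMap.range f = ⊥ := by
    rcases hcase with hA | hB
    · rw [LinearMap.range_eq_bot]
      apply LinearMap.ext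
      intro z
      have hz : z = 0 := by
        apply Subtype.ext
        exact (Submodule.mem_bot _).mp (hA.le z.2)
      rw [hz, map_zero]; rfl
    · apply (Submodule.eq_bot_iff _).mpr
      intro x _
      apply Subtype.ext
      exact (Submodule.mem_bot _).mp (hB.le x.2)
  rw [hrange]
  exact ⟨⊤, isCompl_bot_top⟩
end SP


namespace SP
noncomputable section RightSide
def cc : SP := tt * xx
lemma cc_ne_zero : cc ≠ 0 := sp_mul_ne_zero tt_ne_zero xx_ne_zero

def I : Submodule SPᵐᵒᵖ SP := Submodule.span SPᵐᵒᵖ {xx}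
def J : Submodule SPᵐᵒᵖ SP := Submodule.span SPᵐᵒᵖ {cc}
def N : Submodule SPᵐᵒᵖ SP := I ⊔ J

lemma mem_I {m : SP} : m ∈ I ↔ ∃ r : SP, xx * r = m := by
  rw [I, Submodule.mem_span_singleton]
  constructor
  · rintro ⟨a, rfl⟩; exact ⟨a.unop, rfl⟩
  · rintro ⟨r, rfl⟩; exact ⟨op r, rfl⟩

lemma mem_J {m : SP} : m ∈ J ↔ ∃ r : SP, cc * r = m := by
  rw [J, Submodule.mem_span_singleton]
  constructor
  · rintro ⟨a, rfl⟩; exact ⟨a.unop, rfl⟩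
  · rintro ⟨r, rfl⟩; exact ⟨op r, rfl⟩

lemma I_inf_J : I ⊓ J = ⊥ := by
  apply (Submodule.eq_bot_iff _).mpr
  rintro m ⟨hmI, hmJ⟩
  obtain ⟨r, hr⟩ := mem_I.mp hmI
  obtain ⟨s, hs⟩ := mem_J.mp hmJ
  have : xx * r = tt * (xx * s) := by rw [hr, ← hs, cc, mul_assoc]
  obtain ⟨hr0, -⟩ := disjoint_key this
  rw [← hr, hr0, mul_zero]

def A : Submodule SPᵐᵒᵖ ↥N := I.comap N.subtype
def B : Submodule SPᵐᵒᵖ ↥N := J.comap N.subtype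

lemma hI_le_N : I ≤ N := le_sup_left
lemma hJ_le_N : J ≤ N := le_sup_right

lemma hcompl : IsCompl A B := by
  constructor
  · rw [disjoint_iff]
    apply (Submodule.eq_bot_iff _).mpr
    rintro z ⟨hzA, hzB⟩
    have : (z : SP) ∈ I ⊓ J := ⟨hzA, hzB⟩
    rw [I_inf_J, Submodule.mem_bot] at this
    exact Subtype.ext this
  · rw [codisjoint_iff]
    apply Submodule.eq_top_iff'.mpr
    intro z
    have hz : (z : SP) ∈ I ⊔ J := z.2
    obtain ⟨y, hy, w, hw, hyw⟩ := Submodule.mem_sup.mp hz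
    apply Submodule.mem_sup.mpr
    exact ⟨⟨y, hI_le_N hy⟩, hy, ⟨w, hJ_le_N hw⟩, hw, Subtype.ext hyw⟩

lemma cc_mul_mem_J (m : SP) : cc * m ∈ J := mem_J.mpr ⟨m, rfl⟩

def f : ↥A →ₗ[SPᵐᵒᵖ] ↥B where
  toFun z := ⟨⟨cc * (z : ↥N), hJ_le_N (cc_mul_mem_J _)⟩, cc_mul_mem_J _⟩
  map_add' z w := by
    apply Subtype.ext; apply Subtype.ext
    show cc * ((z : ↥N) + (w : ↥N) : ↥N) = cc * (z : ↥N) + cc * (w : ↥N)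
    push_cast
    rw [mul_add]
  map_smul' a z := by
    apply Subtype.ext; apply Subtype.ext
    show cc * (((z : ↥N) : SP) * a.unop) = (cc * (z : ↥N)) * a.unop
    rw [mul_assoc]

lemma ker_f : LinearMap.ker f = ⊥ := by
  apply (Submodule.eq_bot_iff _).mpr
  intro z hz
  have : cc * ((z : ↥N) : SP) = 0 := by
    have := congrArg (fun w : ↥B => ((w : ↥N) : SP)) hz
    simpa [f] using this
  rcases mul_eq_zero_iff.mp this with h | h
  · exact absurd h cc_ne_zero
  · exact Subtype.ext (Subtype.ext h)

def g0 : SP →ₗ[SPᵐᵒᵖ] ↥B where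
  toFun m := ⟨⟨cc * m, hJ_le_N (cc_mul_mem_J _)⟩, cc_mul_mem_J _⟩
  map_add' z w := by
    apply Subtype.ext; apply Subtype.ext
    show cc * (z + w) = cc * z + cc * w
    rw [mul_add]
  map_smul' a z := by
    apply Subtype.ext; apply Subtype.ext
    show cc * (z * a.unop) = (cc * z) * a.unop
    rw [mul_assoc]

lemma g0_bij : Function.Bijective g0 := by
  constructor
  · intro m m' h
    have : cc * m = cc * m' := by
      have := congrArg (fun w : ↥B => ((w : ↥N) : SP)) h
      simpa [g0] using this
    have h0 : cc * (m - m') = 0 := by rw [mul_sub, this, sub_self]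
    rcases mul_eq_zero_iff.mp h0 with h | h
    · exact absurd h cc_ne_zero
    · exact sub_eq_zero.mp h
  · intro b
    obtain ⟨s, hs⟩ := mem_J.mp b.2
    exact ⟨s, Subtype.ext (Subtype.ext hs)⟩

noncomputable def g : SP ≃ₗ[SPᵐᵒᵖ] ↥B := LinearEquiv.ofBijective g0 g0_bij

lemma g_mem_range (m : SP) : g m ∈ LinearMap.range f ↔ m ∈ I := by
  simp only [LinearMap.mem_range]
  constructor
  · rintro ⟨z, hz⟩
    have hval : cc * ((z : ↥N) : SP) = cc * m := by
      have := congrArg (fun w : ↥B => ((w : ↥N) : SP)) hz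
      simpa [f, g, g0, LinearEquiv.ofBijective_apply] using this
    have h0 : cc * (((z : ↥N) : SP) - m) = 0 := by rw [mul_sub, hval, sub_self]
    rcases mul_eq_zero_iff.mp h0 with h | h
    · exact absurd h cc_ne_zero
    · rw [← sub_eq_zero.mp h]
      exact z.2
  · intro hm
    refine ⟨⟨⟨m, hI_le_N hm⟩, hm⟩, ?_⟩
    apply Subtype.ext; apply Subtype.ext
    rfl

lemma no_compl_I (Q : Submodule SPᵐᵒᵖ SP) : ¬ IsCompl I Q := by
  intro hQ
  have h1 : (1 : SP) ∈ I ⊔ Q := by rw [codisjoint_iff.mp hQ.codisjoint]; trivial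
  obtain ⟨p, hp, q, hq, hpq⟩ := Submodule.mem_sup.mp h1
  have key : ∀ m, m ∈ I → p * m = m := by
    intro m hm
    have hdecomp : p * m + q * m = m := by
      rw [← add_mul, hpq, one_mul]
    have hpm : p * m ∈ I := I.smul_mem (op m) hp
    have hqm : q * m ∈ Q := Q.smul_mem (op m) hq
    have hsub : m - p * m ∈ I := I.sub_mem hm hpm
    have heq : q * m = m - p * m := eq_sub_of_add_eq' hdecomp
    have : q * m ∈ I ⊓ Q := ⟨heq ▸ hsub, hqm⟩
    rw [disjoint_iff.mp hQ.disjoint, Submodule.mem_bot] at this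
    rw [this, add_zero] at hdecomp
    exact hdecomp
  have hpp : p * p = p := key p hp
  have : p = 0 ∨ p = 1 := by
    have h0 : p * (p - 1) = 0 := by rw [mul_sub, hpp, mul_one, sub_self]
    rcases mul_eq_zero_iff.mp h0 with h | h
    · exact Or.inl h
    · exact Or.inr (sub_eq_zero.mp h)
  rcases this with rfl | rfl
  · have := key xx (mem_I.mpr ⟨1, mul_one xx⟩)
    rw [zero_mul] at this
    exact xx_ne_zero this.symm
  · obtain ⟨r, hr⟩ := mem_I.mp hp
    exact one_notin_xxR r hr
  
theorem not_right : ¬ IsC4StarModule SPᵐᵒᵖ SP := by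
  intro h
  obtain ⟨C0, hC0⟩ := h N A B hcompl f (by rw [ker_f]; exact ⟨⊤, isCompl_bot_top⟩)
  have hcc := (Submodule.orderIsoMapComap g).symm.isCompl hC0
  have hmap : Submodule.map (g.symm : ↥B →ₗ[SPᵐᵒᵖ] SP) (LinearMap.range f) = I := by
    ext m
    rw [Submodule.mem_map]
    constructor
    · rintro ⟨y, hy, rfl⟩
      have := (g_mem_range (g.symm y)).mp (by rwa [g.apply_symm_apply])
      exact this
    · intro hm
      exact ⟨g m, (g_mem_range m).mpr hm, g.symm_apply_apply m⟩
  rw [Submodule.orderIsoMapComap_symm_apply', Submodule.orderIsoMapComap_symm_apply',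
    hmap] at hcc
  exact no_compl_I _ hcc
end RightSide
end SP



/-- There exists a ring which is left `C4*` but not right `C4*`. -/
theorem exists_left_not_right :
    ∃ (R : Type) (inst : Ring R),
      @IsLeftC4StarRing R inst ∧ ¬ @IsRightC4StarRing R inst :=
  ⟨SP, SP.instRing, SP.left_c4star, SP.not_right⟩
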